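/- arXiv:1104.1810 — 4 statements merged into one kernel-verified Lean document; each statement's English description precedes it below -/
import Mathlib

section
/- Let G be a compact group acting continuously on the right on a compact Hausdorff space X. If the action of G on C(X) is ergodic, i.e., the only continuous functions f : X → ℝ satisfying f(x·s) = f(x) for all x ∈ X and s ∈ G are the constant functions, then the action of G on X is transitive: for every x ∈ X, the orbit O_x = {x·s : s ∈ G} equals X. -/
/-- **Ergodicity implies transitivity for compact group actions.**
Let `G` be a compact (topological) group acting continuously on the right on a
compact Hausdorff space `X` (the action is given by `act : X → G → X`).  If the
induced action on `C(X)` is ergodic, i.e. the only continuous real-valued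
functions `f` on `X` with `f (x · s) = f x` for all `x, s` are the constants,
then the action is transitive: every orbit is all of `X`. -/
theorem ergodic_action_of_compact_group_is_transitive
    {G : Type*} [Group G] [TopologicalSpace G] [IsTopologicalGroup G] [CompactSpace G]
    {X : Type*} [TopologicalSpace X] [CompactSpace X] [T2Space X]
    (act : X → G → X)
    (h_cont : Continuous fun p : X × G => act p.1 p.2)
    (h_one : ∀ x : X, act x 1 = x)
    (h_mul : ∀ (x : X) (s t : G), act (act x s) t = act x (s * t))
    (h_erg : ∀ f : C(X, ℝ), (∀ (x : X) (s : G), f (act x s) = f x) →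
      ∃ c : ℝ, ∀ x : X, f x = c) :
    ∀ x : X, {y : X | ∃ s : G, y = act x s} = Set.univ := by
  intro x
  by_contra hne
  -- the orbit is compact, hence closed
  have horb : {y : X | ∃ s : G, y = act x s} = Set.range fun s => act x s := by
    ext y; simp [eq_comm]
  have hcomp : IsCompact (Set.range fun s => act x s) := by
    have : Continuous fun s : G => act x s := h_cont.comp (Continuous.prodMk_right x)
    exact isCompact_range this
  have hclosed : IsClosed {y : X | ∃ s : G, y = act x s} := by
    rw [horb]; exact hcomp.isClosed
  obtain ⟨y, hy⟩ : ∃ y : X, y ∉ {y : X | ∃ s : G, y = act x s} := by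
    by_contra h
    push_neg at h
    exact hne (Set.eq_univ_of_forall h)
  -- Urysohn function: 0 on the orbit, 1 at y
  obtain ⟨g, hg0, hg1, hg01⟩ := exists_continuous_zero_one_of_isClosed hclosed
    (isClosed_singleton (x := y))
    (Set.disjoint_singleton_right.mpr hy)
  -- F z = sup over orbit of z of g
  set F : X → ℝ := fun z => sSup ((fun s : G => g (act z s)) '' Set.univ) with hF
  have hFcont : Continuous F :=
    isCompact_univ.continuous_sSup (f := fun z s => g (act z s)) (g.continuous.comp h_cont)
  have hrange : ∀ z, (fun s : G => g (act z s)) '' Set.univ = Set.range fun s => g (act z s) :=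
    fun z => Set.image_univ
  have hbdd : ∀ z, BddAbove (Set.range fun s : G => g (act z s)) := by
    intro z
    refine ⟨1, ?_⟩
    rintro r ⟨s, rfl⟩
    exact (hg01 _).2
  -- invariance of F
  have hinv : ∀ (z : X) (t : G), F (act z t) = F z := by
    intro z t
    have : (fun s : G => g (act (act z t) s)) = (fun u : G => g (act z u)) ∘ (fun s => t * s) := by
      funext s; simp [h_mul]
    simp only [hF, hrange, this]
    rw [Set.range_comp, Set.range_eq_univ.mpr (fun u => ⟨t⁻¹ * u, by group⟩), Set.image_univ]
  obtain ⟨c, hc'⟩ := h_erg ⟨F, hFcont⟩ (fun z t => hinv z t)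
  have hc : ∀ z : X, F z = c := hc'
  -- F x = 0
  have hFx : F x = 0 := by
    have : (fun s : G => g (act x s)) '' Set.univ = {0} := by
      apply Set.eq_singleton_iff_nonempty_unique_mem.mpr
      constructor
      · exact ⟨g (act x 1), Set.mem_image_of_mem _ (Set.mem_univ 1)⟩
      · rintro r ⟨s, -, rfl⟩
        exact hg0 ⟨s, rfl⟩
    simp only [hF]
    rw [this]
    exact csSup_singleton 0
  -- F y ≥ 1
  have hFy : (1 : ℝ) ≤ F y := by
    have h1 : g y = 1 := hg1 rfl
    have : g (act y 1) ∈ Set.range fun s : G => g (act y s) := ⟨1, rfl⟩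
    have hle := le_csSup (hbdd y) this
    rw [h_one, h1] at hle
    simpa [hF, hrange] using hle
  have h1 : c = 0 := (hc x ▸ hFx : F x = 0) ▸ (hc x).symm
  have h2 := hc y
  rw [h2, h1] at hFy
  linarith
end

section
/- Let G be a compact group acting continuously on the right on a compact Hausdorff space X, and suppose the action of G on C(X) is ergodic, i.e., the only continuous functions f : X → ℝ satisfying f(x·s) = f(x) for all x ∈ X and s ∈ G are the constants. Fix x₀ ∈ X and let G_{x₀} = {s ∈ G : x₀·s = x₀} be the stabilizer of x₀. Then G_{x₀} is a closed subgroup of G, and the right coset space G_{x₀}\G, equipped with the quotient topology, is homeomorphic to X via the map G_{x₀}s ↦ x₀·s. -/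
/-- The stabilizer subgroup of a point under a right action. -/
def ergStab {G : Type*} [Group G] {X : Type*} (act : X → G → X) (x₀ : X)
    (h_one : act x₀ 1 = x₀)
    (h_mul : ∀ s t : G, act (act x₀ s) t = act x₀ (s * t)) : Subgroup G where
  carrier := {s : G | act x₀ s = x₀}
  one_mem' := h_one
  mul_mem' := by
    intro a b ha hb
    simp only [Set.mem_setOf_eq] at *
    rw [← h_mul, ha, hb]
  inv_mem' := by
    intro a ha
    simp only [Set.mem_setOf_eq] at *
    conv_lhs => rw [← ha]
    rw [h_mul, mul_inv_cancel, h_one]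

/-- **Ergodic compact group actions are homogeneous spaces.**
Let `G` be a compact group acting continuously on the right on a compact Hausdorff
space `X`, and suppose the induced action on `C(X)` is ergodic (the only
`G`-invariant continuous real functions are constants).  Fix `x₀ ∈ X`.  Then the
stabilizer `G_{x₀} = {s : G | x₀ · s = x₀}` is a closed subgroup of `G`, and the
right coset space `G_{x₀}\G` (with the quotient topology) is homeomorphic to `X`
via the map `G_{x₀} s ↦ x₀ · s`. -/
theorem ergodic_action_homeomorph_coset_space
    {G : Type*} [Group G] [TopologicalSpace G] [IsTopologicalGroup G] [CompactSpace G]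
    {X : Type*} [TopologicalSpace X] [CompactSpace X] [T2Space X]
    (act : X → G → X)
    (h_cont : Continuous fun p : X × G => act p.1 p.2)
    (h_one : ∀ x : X, act x 1 = x)
    (h_mul : ∀ (x : X) (s t : G), act (act x s) t = act x (s * t))
    (h_erg : ∀ f : C(X, ℝ), (∀ (x : X) (s : G), f (act x s) = f x) →
      ∃ c : ℝ, ∀ x : X, f x = c)
    (x₀ : X) :
    ∃ H : Subgroup G, (H : Set G) = {s : G | act x₀ s = x₀} ∧ IsClosed (H : Set G) ∧
      ∃ φ : Quotient (QuotientGroup.rightRel H) ≃ₜ X,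
        ∀ s : G, φ (Quotient.mk (QuotientGroup.rightRel H) s) = act x₀ s := by
  -- continuity of partial maps
  have hc1 : ∀ x : X, Continuous fun s : G => act x s := fun x =>
    h_cont.comp (continuous_const.prodMk continuous_id)
  -- the stabilizer subgroup
  set H : Subgroup G := ergStab act x₀ (h_one x₀) (h_mul x₀) with hHdef
  refine ⟨H, rfl, (isClosed_singleton).preimage (hc1 x₀), ?_⟩
  -- surjectivity of the orbit map via ergodicity
  have hsurj : ∀ y : X, ∃ s : G, act x₀ s = y := by
    by_contra hy
    push_neg at hy
    obtain ⟨y, hy⟩ := hy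
    have horb : ∀ x : X, IsCompact ((fun s : G => act x s) '' Set.univ) := fun x =>
      isCompact_univ.image (hc1 x)
    have hdisj : Disjoint ((fun s : G => act x₀ s) '' Set.univ)
        ((fun s : G => act y s) '' Set.univ) := by
      rw [Set.disjoint_left]
      rintro z ⟨s, -, rfl⟩ ⟨t, -, ht⟩
      simp only at ht
      apply hy (s * t⁻¹)
      have h2 : act (act x₀ s) t⁻¹ = act (act y t) t⁻¹ := by rw [ht]
      rw [h_mul, h_mul, mul_inv_cancel, h_one] at h2
      exact h2
    obtain ⟨g, hg0, hg1, -⟩ := exists_continuous_zero_one_of_isClosed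
      (horb x₀).isClosed (horb y).isClosed hdisj
    -- invariant function f x = sup of g on the orbit of x
    set f : X → ℝ := fun x => sSup (g '' ((fun s : G => act x s) '' Set.univ)) with hf
    have hfc : Continuous f := by
      have he : f = fun x => sSup ((fun x s => g (act x s)) x '' Set.univ) := by
        funext x
        show sSup (⇑g '' ((fun s : G => act x s) '' Set.univ)) = _
        rw [Set.image_image]
      rw [he]
      exact isCompact_univ.continuous_sSup (g.continuous.comp h_cont)
    have hfi : ∀ (x : X) (s : G), f (act x s) = f x := by
      intro x s
      have horbe : ((fun t : G => act (act x s) t) '' Set.univ)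
          = ((fun t : G => act x t) '' Set.univ) := by
        ext z
        constructor
        · rintro ⟨t, -, rfl⟩
          exact ⟨s * t, Set.mem_univ _, (h_mul x s t).symm⟩
        · rintro ⟨t, -, rfl⟩
          refine ⟨s⁻¹ * t, Set.mem_univ _, ?_⟩
          show act (act x s) (s⁻¹ * t) = act x t
          rw [h_mul, mul_inv_cancel_left]
      simp only [hf, horbe]
    obtain ⟨c, hc⟩ := h_erg ⟨f, hfc⟩ hfi
    -- but f x₀ = 0 and f y = 1
    have h0 : f x₀ = 0 := by
      have he : g '' ((fun s : G => act x₀ s) '' Set.univ) = {0} := by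
        apply Set.eq_singleton_iff_nonempty_unique_mem.mpr
        refine ⟨⟨g (act x₀ 1), Set.mem_image_of_mem _ ⟨1, Set.mem_univ _, rfl⟩⟩, ?_⟩
        rintro z ⟨w, hw, rfl⟩; exact hg0 hw
      rw [hf]; simp only [he, csSup_singleton]
    have h1 : f y = 1 := by
      have he : g '' ((fun s : G => act y s) '' Set.univ) = {1} := by
        apply Set.eq_singleton_iff_nonempty_unique_mem.mpr
        refine ⟨⟨g (act y 1), Set.mem_image_of_mem _ ⟨1, Set.mem_univ _, rfl⟩⟩, ?_⟩
        rintro z ⟨w, hw, rfl⟩; exact hg1 hw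
      rw [hf]; simp only [he, csSup_singleton]
    have hcon : (0 : ℝ) = 1 := by
      have e0 := hc x₀; have e1 := hc y
      simp only [ContinuousMap.coe_mk] at e0 e1
      rw [h0] at e0; rw [h1] at e1; rw [e0, ← e1]
    norm_num at hcon
  -- well-defined map on the quotient
  have hwd : ∀ (a b : G), (QuotientGroup.rightRel H) a b → act x₀ a = act x₀ b := by
    intro a b hab
    rw [QuotientGroup.rightRel_apply] at hab
    have hba : act x₀ (b * a⁻¹) = x₀ := hab
    calc act x₀ a = act (act x₀ (b * a⁻¹)) a := by rw [hba]
    _ = act x₀ b := by rw [h_mul, inv_mul_cancel_right]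
  set q : Quotient (QuotientGroup.rightRel H) → X :=
    Quotient.lift (fun s => act x₀ s) hwd with hq
  have hqbij : Function.Bijective q := by
    constructor
    · rintro ⟨a⟩ ⟨b⟩ hab
      have hab' : act x₀ a = act x₀ b := hab
      have hm : act x₀ (b * a⁻¹) = x₀ := by
        rw [← h_mul, ← hab', h_mul, mul_inv_cancel, h_one]
      exact Quotient.sound (QuotientGroup.rightRel_apply.mpr hm)
    · intro y
      obtain ⟨s, hs⟩ := hsurj y
      exact ⟨Quotient.mk _ s, hs⟩
  have hqc : Continuous q := Continuous.quotient_lift (hc1 x₀) _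
  exact ⟨Continuous.homeoOfEquivCompactToT2 (f := Equiv.ofBijective q hqbij) hqc,
    fun s => rfl⟩
end

section
/- Let G be a second countable compact group acting continuously on the right on a compact Hausdorff space X. Suppose the action of G on C(X) given by (σ_s f)(x) = f(x·s) is ergodic, i.e., the only continuous functions f : X → ℝ satisfying f(x·s) = f(x) for all x ∈ X and s ∈ G are the constants. Then X is a second countable topological space. -/
/-- **Second countability of ergodic quotients.**
Let `G` be a second countable compact group acting continuously on the right on a
compact Hausdorff space `X`.  If the induced action of `G` on `C(X)` is ergodic
(the only `G`-invariant continuous real functions are the constants), then `X` is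
second countable. -/
theorem secondCountable_of_ergodic_compact_group_action
    {G : Type*} [Group G] [TopologicalSpace G] [IsTopologicalGroup G] [CompactSpace G]
    [SecondCountableTopology G]
    {X : Type*} [TopologicalSpace X] [CompactSpace X] [T2Space X]
    (act : X → G → X)
    (h_cont : Continuous fun p : X × G => act p.1 p.2)
    (h_one : ∀ x : X, act x 1 = x)
    (h_mul : ∀ (x : X) (s t : G), act (act x s) t = act x (s * t))
    (h_erg : ∀ f : C(X, ℝ), (∀ (x : X) (s : G), f (act x s) = f x) →
      ∃ c : ℝ, ∀ x : X, f x = c) :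
    SecondCountableTopology X := by
  -- trivial case: empty space
  rcases isEmpty_or_nonempty X with hX | hX
  · exact ⟨⟨∅, Set.countable_empty, by
      apply TopologicalSpace.ext
      funext s
      have : s = ∅ := Set.eq_empty_of_isEmpty s
      subst this
      simp [isOpen_empty]⟩⟩
  -- continuity of orbit maps
  have horb_cont : ∀ x : X, Continuous fun s : G => act x s := fun x =>
    h_cont.comp (continuous_const.prodMk continuous_id)
  -- the action is transitive
  have htrans : ∀ x y : X, ∃ s : G, act x s = y := by
    intro x y
    by_contra hcon
    push_neg at hcon
    have hdisj : Disjoint (Set.range (act x)) (Set.range (act y)) := by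
      rw [Set.disjoint_left]
      rintro z ⟨s, rfl⟩ ⟨t, ht⟩
      apply hcon (s * t⁻¹)
      rw [← h_mul, ← ht, h_mul, mul_inv_cancel, h_one]
    have hcx : IsClosed (Set.range (act x)) := (isCompact_range (horb_cont x)).isClosed
    have hcy : IsClosed (Set.range (act y)) := (isCompact_range (horb_cont y)).isClosed
    obtain ⟨f, hf0, hf1, hf01⟩ := exists_continuous_zero_one_of_isClosed hcx hcy hdisj
    -- the invariant function: supremum of f over the orbit
    set F : X → ℝ := fun z => sSup ((fun s => f (act z s)) '' Set.univ) with hF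
    have hFcont : Continuous F := by
      apply IsCompact.continuous_sSup isCompact_univ
      exact f.continuous.comp h_cont
    have himage : ∀ (z : X) (t : G),
        (fun s => f (act (act z t) s)) '' Set.univ = (fun s => f (act z s)) '' Set.univ := by
      intro z t
      ext r
      constructor
      · rintro ⟨s, -, rfl⟩
        exact ⟨t * s, Set.mem_univ _, by
          show f (act z (t * s)) = f (act (act z t) s); rw [h_mul]⟩
      · rintro ⟨s, -, rfl⟩
        exact ⟨t⁻¹ * s, Set.mem_univ _, by
          show f (act (act z t) (t⁻¹ * s)) = f (act z s); rw [h_mul, mul_inv_cancel_left]⟩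
    have hFinv : ∀ (z : X) (t : G), F (act z t) = F z := by
      intro z t
      simp only [hF]
      rw [himage]
    obtain ⟨c, hc⟩ := h_erg ⟨F, hFcont⟩ hFinv
    have hFx : F x = 0 := by
      have : (fun s => f (act x s)) '' Set.univ = {0} := by
        apply Set.eq_singleton_iff_nonempty_unique_mem.mpr
        refine ⟨⟨f (act x 1), 1, Set.mem_univ _, rfl⟩, ?_⟩
        rintro r ⟨s, -, rfl⟩
        exact hf0 ⟨s, rfl⟩
      rw [hF]; simp only [this, csSup_singleton]
    have hFy : F y = 1 := by
      have : (fun s => f (act y s)) '' Set.univ = {1} := by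
        apply Set.eq_singleton_iff_nonempty_unique_mem.mpr
        refine ⟨⟨f (act y 1), 1, Set.mem_univ _, rfl⟩, ?_⟩
        rintro r ⟨s, -, rfl⟩
        have := hf1 ⟨s, rfl⟩
        simpa using this
      rw [hF]; simp only [this, csSup_singleton]
    have h0 : (0 : ℝ) = c := by rw [← hFx]; exact hc x
    have h1 : (1 : ℝ) = c := by rw [← hFy]; exact hc y
    exact zero_ne_one (h0.trans h1.symm)
  -- build the quotient by the stabilizer of a fixed point
  obtain ⟨x₀⟩ := hX
  set H : Subgroup G :=
    { carrier := {s | act x₀ s = x₀}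
      one_mem' := h_one x₀
      mul_mem' := by
        intro s t hs ht
        show act x₀ (s * t) = x₀
        rw [← h_mul, hs, ht]
      inv_mem' := by
        intro s hs
        show act x₀ s⁻¹ = x₀
        have : act (act x₀ s) s⁻¹ = x₀ := by rw [h_mul, mul_inv_cancel, h_one]
        rw [hs] at this
        exact this } with hH
  have hHmem : ∀ s : G, s ∈ H ↔ act x₀ s = x₀ := fun s => Iff.rfl
  -- the orbit map descends to the quotient
  have hresp : ∀ s t : G, (QuotientGroup.leftRel H) s t → act x₀ s⁻¹ = act x₀ t⁻¹ := by
    intro s t hst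
    rw [QuotientGroup.leftRel_apply] at hst
    have h1 : act x₀ (s⁻¹ * t) = x₀ := hst
    calc act x₀ s⁻¹ = act (act x₀ (s⁻¹ * t)) t⁻¹ := by
          rw [h_mul, mul_assoc, mul_inv_cancel, mul_one]
      _ = act x₀ t⁻¹ := by rw [h1]
  let φ : G ⧸ H → X := Quotient.lift (fun s => act x₀ s⁻¹) hresp
  have hφcont : Continuous φ :=
    Continuous.quotient_lift ((horb_cont x₀).comp continuous_inv) _
  have hφsurj : Function.Surjective φ := by
    intro x
    obtain ⟨s, hs⟩ := htrans x₀ x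
    exact ⟨Quotient.mk _ s⁻¹, by show act x₀ s⁻¹⁻¹ = x; rw [inv_inv, hs]⟩
  have hφinj : Function.Injective φ := by
    intro a b
    induction a using Quotient.ind
    induction b using Quotient.ind
    rename_i s t
    intro hst
    have h1 : act x₀ s⁻¹ = act x₀ t⁻¹ := hst
    exact Quotient.sound (QuotientGroup.leftRel_apply.mpr
      (show act x₀ (s⁻¹ * t) = x₀ by rw [← h_mul, h1, h_mul, inv_mul_cancel, h_one]))
  -- the quotient is compact, X is T2, so φ is a homeomorphism
  let e : G ⧸ H ≃ₜ X :=
    Continuous.homeoOfEquivCompactToT2 (f := Equiv.ofBijective φ ⟨hφinj, hφsurj⟩) hφcont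
  exact e.symm.secondCountableTopology
end

section
/- Let A be a separable C*-algebra, G a second countable compact group, and σ : G → Aut(A) a homomorphism into the *-automorphism group of A such that s ↦ σ_s(a) is norm-continuous for every a ∈ A. Let P be a primitive ideal of A, i.e., P = ker ρ for some irreducible representation ρ of A on a separable complex Hilbert space, and let G_P = {s ∈ G : σ_s(P) = P} be the stability group of P (a closed subgroup of G). Suppose (π, U) is an irreducible covariant representation of (A, G_P, σ) on a separable complex Hilbert space H with ker π = P: π : A → B(H) is a nondegenerate *-homomorphism, U : G_P → B(H) is a strong-operator-continuous homomorphism into the unitary group, U(s)π(a)U(s)* = π(σ_s(a)) for all a ∈ A and s ∈ G_P, and the only bounded operators on H commuting with all π(a) and all U(s) are scalar multiples of the identity. Then π is a homogeneous representation of A: for every nonzero orthogonal projection E ∈ B(H) commuting with π(A), the ideal {a ∈ A : π(a)E = 0} equals ker π = P. -/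
open ContinuousLinearMap in
/-- The orthogonal projection onto a closed invariant subspace commutes with the operator. -/
lemma aux_proj_commute {H : Type*} [NormedAddCommGroup H] [InnerProductSpace ℂ H]
    [CompleteSpace H] (K : Submodule ℂ H) [CompleteSpace K] (T : H →L[ℂ] H)
    (hT : ∀ x ∈ K, T x ∈ K) (hT' : ∀ x ∈ K, (star T) x ∈ K) :
    (K.subtypeL ∘L K.orthogonalProjectionOnto) * T = T * (K.subtypeL ∘L K.orthogonalProjectionOnto) := by
  set Pk : H →L[ℂ] H := K.subtypeL ∘L K.orthogonalProjectionOnto with hPk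
  have hPk_apply : ∀ x ∈ K, Pk x = x := fun x hx => Submodule.starProjection_eq_self_iff.mpr hx
  have hmem : ∀ x, Pk x ∈ K := fun x => (K.orthogonalProjectionOnto x).2
  have h1 : ∀ S : H →L[ℂ] H, (∀ x ∈ K, S x ∈ K) → Pk * (S * Pk) = S * Pk := by
    intro S hS
    ext x
    simp only [ContinuousLinearMap.mul_apply]
    exact hPk_apply _ (hS _ (hmem x))
  have hsa : IsSelfAdjoint Pk := isSelfAdjoint_starProjection K
  have h2 : Pk * (T * Pk) = T * Pk := h1 T hT
  have h3 : Pk * (star T * Pk) = star T * Pk := h1 _ hT'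
  have h4 := congrArg star h3
  simp only [star_mul, hsa.star_eq, star_star, ← mul_assoc] at h4
  calc Pk * T = Pk * T * Pk := h4.symm
    _ = T * Pk := by rw [mul_assoc]; exact h2

/-- A closed subspace invariant under a star-closed irreducible family of operators is trivial. -/
lemma aux_invariant_trivial {H : Type*} [NormedAddCommGroup H] [InnerProductSpace ℂ H]
    [CompleteSpace H] (S : Set (H →L[ℂ] H)) (hS : ∀ T ∈ S, star T ∈ S)
    (hirr : ∀ T : H →L[ℂ] H, (∀ R ∈ S, T * R = R * T) → ∃ c : ℂ, T = c • 1)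
    (K : Submodule ℂ H) (hKc : IsClosed (K : Set H))
    (hinv : ∀ R ∈ S, ∀ x ∈ K, R x ∈ K) : K = ⊥ ∨ K = ⊤ := by
  haveI : CompleteSpace K := hKc.completeSpace_coe
  set Pk : H →L[ℂ] H := K.subtypeL ∘L K.orthogonalProjectionOnto with hPk
  have hPk_apply : ∀ x ∈ K, Pk x = x := fun x hx => Submodule.starProjection_eq_self_iff.mpr hx
  have hmem : ∀ x, Pk x ∈ K := fun x => (K.orthogonalProjectionOnto x).2
  have hcomm : ∀ R ∈ S, Pk * R = R * Pk := fun R hR =>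
    aux_proj_commute K R (hinv R hR) (hinv _ (hS R hR))
  obtain ⟨c, hc⟩ := hirr Pk hcomm
  by_cases hbot : K = ⊥
  · exact Or.inl hbot
  · right
    obtain ⟨x, hxK, hx0⟩ := Submodule.exists_mem_ne_zero_of_ne_bot hbot
    have hx : Pk x = x := hPk_apply x hxK
    rw [hc] at hx
    simp only [ContinuousLinearMap.smul_apply, ContinuousLinearMap.one_apply] at hx
    have hc1 : c = 1 := by
      by_contra hne
      have h2 : (c - 1) • x = 0 := by
        rw [sub_smul, one_smul, hx, sub_self]
      rcases smul_eq_zero.mp h2 with h | h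
      · exact hne (sub_eq_zero.mp h)
      · exact hx0 h
    rw [Submodule.eq_top_iff']
    intro y
    have : Pk y = y := by rw [hc, hc1]; simp
    rw [← this]; exact hmem y

set_option maxHeartbeats 1000000 in
/-- **Homogeneity of the C*-algebra part of irreducible covariant
representations of stability subsystems.**  Let `(A, G, σ)` be a separable
C*-dynamical system with `G` second countable compact.  Let `P = ker ρ` be a
primitive ideal of `A` (`ρ` an irreducible representation on a separable
Hilbert space), with stability group `G_P = {s : G | σ_s(P) = P}`.  If `(π, U)`
is an irreducible covariant representation of `(A, G_P, σ)` on a separable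
Hilbert space `H` with `ker π = P`, then `π` is homogeneous: for every nonzero
orthogonal projection `E` commuting with `π(A)`, the kernel of the
subrepresentation `π^E` equals `P`. -/
theorem homogeneous_of_irreducible_covariant_rep_of_stability_group
    -- the C*-algebra A, separable
    {A : Type*} [NonUnitalNormedRing A] [StarRing A] [CStarRing A]
    [NormedSpace ℂ A] [IsScalarTower ℂ A A] [SMulCommClass ℂ A A]
    [StarModule ℂ A] [CompleteSpace A] [TopologicalSpace.SeparableSpace A]
    -- the compact second countable group G
    {G : Type*} [Group G] [TopologicalSpace G] [IsTopologicalGroup G]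
    [CompactSpace G] [SecondCountableTopology G]
    -- the point-norm continuous action σ of G on A
    (σ : G → (A ≃⋆ₐ[ℂ] A))
    (hσ_one : ∀ a : A, σ 1 a = a)
    (hσ_mul : ∀ (s t : G) (a : A), σ (s * t) a = σ s (σ t a))
    (hσ_cont : ∀ a : A, Continuous fun s : G => σ s a)
    -- P is a primitive ideal: the kernel of an irreducible representation ρ
    (P : Set A)
    {H' : Type*} [NormedAddCommGroup H'] [InnerProductSpace ℂ H']
    [CompleteSpace H'] [TopologicalSpace.SeparableSpace H']
    (ρ : A →⋆ₙₐ[ℂ] (H' →L[ℂ] H'))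
    (hρ_nondeg : Dense ((Submodule.span ℂ {x : H' | ∃ (a : A) (ξ : H'), ρ a ξ = x} :
      Submodule ℂ H') : Set H'))
    (hρ_irr : ∀ T : H' →L[ℂ] H', (∀ a : A, T * ρ a = ρ a * T) →
      ∃ c : ℂ, T = c • (1 : H' →L[ℂ] H'))
    (hP : P = {a : A | ρ a = 0})
    -- the covariant representation (π, U) of (A, G_P, σ) on H with ker π = P,
    -- where G_P = {s : G | σ s '' P = P} is the stability group of P
    {H : Type*} [NormedAddCommGroup H] [InnerProductSpace ℂ H] [CompleteSpace H]
    [TopologicalSpace.SeparableSpace H]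
    (π : A →⋆ₙₐ[ℂ] (H →L[ℂ] H))
    (h_nondeg : Dense ((Submodule.span ℂ {x : H | ∃ (a : A) (ξ : H), π a ξ = x} :
      Submodule ℂ H) : Set H))
    (h_ker : {a : A | π a = 0} = P)
    (U : G → (H →L[ℂ] H))
    (hU_unitary : ∀ s ∈ {s : G | σ s '' P = P}, U s ∈ unitary (H →L[ℂ] H))
    (hU_one : U 1 = 1)
    (hU_mul : ∀ s ∈ {s : G | σ s '' P = P}, ∀ t ∈ {s : G | σ s '' P = P},
      U (s * t) = U s * U t)
    (hU_sot : ∀ ξ : H, ContinuousOn (fun s : G => U s ξ) {s : G | σ s '' P = P})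
    (h_cov : ∀ s ∈ {s : G | σ s '' P = P}, ∀ a : A,
      U s * π a * star (U s) = π (σ s a))
    (h_irr : ∀ T : H →L[ℂ] H, (∀ a : A, T * π a = π a * T) →
      (∀ s ∈ {s : G | σ s '' P = P}, T * U s = U s * T) →
      ∃ c : ℂ, T = c • (1 : H →L[ℂ] H)) :
    -- conclusion: π is homogeneous
    ∀ E : H →L[ℂ] H, IsSelfAdjoint E → IsIdempotentElem E → E ≠ 0 →
      (∀ a : A, E * π a = π a * E) → {a : A | π a * E = 0} = P := by
  classical
  intro E hE_sa hE_idem hE_ne hE_comm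
  letI : NonUnitalCStarAlgebra A := {}
  -- basic facts about the action σ
  have hσ_invl : ∀ (s : G) (b : A), σ s⁻¹ (σ s b) = b := fun s b => by
    rw [← hσ_mul, inv_mul_cancel, hσ_one]
  have hσ_invr : ∀ (s : G) (b : A), σ s (σ s⁻¹ b) = b := fun s b => by
    rw [← hσ_mul, mul_inv_cancel, hσ_one]
  -- the stability group Γ
  set Γ : Set G := {s : G | σ s '' P = P} with hΓ_def
  have hΓ_one : (1 : G) ∈ Γ := by
    show σ 1 '' P = P
    have h1 : σ 1 '' P = id '' P := Set.image_congr fun b _ => hσ_one b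
    simpa using h1
  have hΓ_inv : ∀ s ∈ Γ, s⁻¹ ∈ Γ := by
    intro s hs
    show σ s⁻¹ '' P = P
    conv_lhs => rw [← hs]
    rw [Set.image_image]
    have h1 : (fun b => σ s⁻¹ (σ s b)) '' P = id '' P := Set.image_congr fun b _ => hσ_invl s b
    simpa using h1
  have hΓ_mul : ∀ s ∈ Γ, ∀ t ∈ Γ, s * t ∈ Γ := by
    intro s hs t ht
    show σ (s * t) '' P = P
    have h1 : σ (s * t) '' P = (fun b => σ s (σ t b)) '' P :=
      Set.image_congr fun b _ => hσ_mul s t b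
    rw [h1, ← Set.image_image]
    rw [show (⇑(σ t) '' P) = P from ht, hs]
  have hmemP : ∀ s ∈ Γ, ∀ b, b ∈ P → σ s b ∈ P := by
    intro s hs b hb
    have : σ s b ∈ σ s '' P := Set.mem_image_of_mem _ hb
    rwa [hs] at this
  -- unitarity facts
  have hU_star : ∀ s ∈ Γ, star (U s) = U s⁻¹ := by
    intro s hs
    obtain ⟨h1, _⟩ := Unitary.mem_iff.mp (hU_unitary s hs)
    have h3 : U s * U s⁻¹ = 1 := by
      rw [← hU_mul s hs s⁻¹ (hΓ_inv s hs), mul_inv_cancel, hU_one]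
    calc star (U s) = star (U s) * (U s * U s⁻¹) := by rw [h3, mul_one]
      _ = (star (U s) * U s) * U s⁻¹ := by rw [mul_assoc]
      _ = U s⁻¹ := by rw [h1, one_mul]
  -- covariance facts
  have hcov1 : ∀ s ∈ Γ, ∀ b : A, U s * π b = π (σ s b) * U s := by
    intro s hs b
    have h := h_cov s hs b
    have h2 : star (U s) * U s = 1 := (Unitary.mem_iff.mp (hU_unitary s hs)).1
    calc U s * π b = U s * π b * (star (U s) * U s) := by rw [h2, mul_one]
      _ = (U s * π b * star (U s)) * U s := by simp only [mul_assoc]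
      _ = π (σ s b) * U s := by rw [h]
  have hcov2 : ∀ s ∈ Γ, ∀ b : A, π b * U s = U s * π (σ s⁻¹ b) := by
    intro s hs b
    have h := hcov1 s hs (σ s⁻¹ b)
    rw [hσ_invr] at h
    exact h.symm
  -- continuity and contractivity of the representations
  have hπ_le : ∀ b : A, ‖π b‖ ≤ ‖b‖ := fun b => NonUnitalStarAlgHom.norm_apply_le π b
  have hρ_le : ∀ b : A, ‖ρ b‖ ≤ ‖b‖ := fun b => NonUnitalStarAlgHom.norm_apply_le ρ b
  have hπ_cont : Continuous π :=
    AddMonoidHomClass.continuous_of_bound π 1 fun b => by simpa using hπ_le b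
  have hρ_cont : Continuous ρ :=
    AddMonoidHomClass.continuous_of_bound ρ 1 fun b => by simpa using hρ_le b
  -- P is closed
  have hP_closed : IsClosed P := by
    rw [hP]
    exact isClosed_singleton.preimage hρ_cont
  -- Γ is compact
  have hΓ_eq : Γ = {s : G | ∀ p ∈ P, σ s p ∈ P} ∩ {s : G | ∀ p ∈ P, σ s⁻¹ p ∈ P} := by
    ext s
    constructor
    · intro hs
      exact ⟨fun p hp => hmemP s hs p hp, fun p hp => hmemP s⁻¹ (hΓ_inv s hs) p hp⟩
    · rintro ⟨h1, h2⟩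
      show σ s '' P = P
      apply Set.Subset.antisymm
      · rintro - ⟨p, hp, rfl⟩; exact h1 p hp
      · intro p hp
        exact ⟨σ s⁻¹ p, h2 p hp, hσ_invr s p⟩
  have hΓ_closed : IsClosed Γ := by
    rw [hΓ_eq]
    apply IsClosed.inter
    · have h1 : {s : G | ∀ p ∈ P, σ s p ∈ P} = ⋂ p ∈ P, (fun s : G => σ s p) ⁻¹' P := by
        ext; simp
      rw [h1]
      exact isClosed_biInter fun p _ => hP_closed.preimage (hσ_cont p)
    · have h1 : {s : G | ∀ p ∈ P, σ s⁻¹ p ∈ P} = ⋂ p ∈ P, (fun s : G => σ s⁻¹ p) ⁻¹' P := by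
        ext; simp
      rw [h1]
      exact isClosed_biInter fun p _ =>
        hP_closed.preimage ((hσ_cont p).comp continuous_inv)
  have hΓ_cpt : IsCompact Γ := hΓ_closed.isCompact
  -- the main set equality
  apply Set.Subset.antisymm
  · -- the hard inclusion
    intro a₀ ha₀
    by_contra ha₀P
    have hρa₀ : ρ a₀ ≠ 0 := fun h => ha₀P (by rw [hP]; exact h)
    have ha₀E : π a₀ * E = 0 := ha₀
    -- replace a₀ by the positive element a = a₀* a₀
    set a : A := star a₀ * a₀ with ha_def
    have haE : π a * E = 0 := by
      rw [ha_def, map_mul, mul_assoc, ha₀E, mul_zero]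
    have hρsa : ∀ s ∈ Γ, ρ (σ s a) ≠ 0 := by
      intro s hs h0
      have he : σ s a = star (σ s a₀) * σ s a₀ := by rw [ha_def, map_mul, map_star]
      rw [he, map_mul, map_star] at h0
      have h1 : ρ (σ s a₀) = 0 := by
        have h2 := CStarRing.norm_star_mul_self (x := ρ (σ s a₀))
        rw [h0, norm_zero] at h2
        exact norm_eq_zero.mp (mul_self_eq_zero.mp h2.symm)
      have h3 : σ s a₀ ∈ P := by rw [hP]; exact h1
      have h4 : a₀ ∈ P := by
        have h5 := hmemP s⁻¹ (hΓ_inv s hs) _ h3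
        rwa [hσ_invl] at h5
      exact ha₀P h4
    have hρa : ρ a ≠ 0 := by
      have h1 := hρsa 1 hΓ_one
      rwa [hσ_one] at h1
    -- self-adjointness
    have hsa_σa : ∀ s : G, IsSelfAdjoint (σ s a) := fun s => by
      rw [ha_def, map_mul, map_star]
      exact IsSelfAdjoint.star_mul_self _
    -- the open cover of Γ
    set r : G → ℝ := fun s => ‖ρ (σ s a)‖ with hr_def
    have hrpos : ∀ s ∈ Γ, 0 < r s := fun s hs => norm_pos_iff.mpr (hρsa s hs)
    set V : G → Set G := fun s => {t : G | ‖σ t a - σ s a‖ < r s / 2} with hV_def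
    have hV_open : ∀ s, IsOpen (V s) := by
      intro s
      have hc : Continuous fun t : G => ‖σ t a - σ s a‖ := ((hσ_cont a).sub continuous_const).norm
      exact isOpen_lt hc continuous_const
    have hV_mem : ∀ s ∈ Γ, s ∈ V s := by
      intro s hs
      show ‖σ s a - σ s a‖ < r s / 2
      rw [sub_self, norm_zero]
      exact half_pos (hrpos s hs)
    obtain ⟨S, hSsub, hSfin, hScov⟩ := hΓ_cpt.elim_finite_subcover_image
      (fun s _ => hV_open s) (fun t ht => Set.mem_biUnion ht (hV_mem t ht))
    -- commutation of Q t = U t * E * star (U t) with π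
    have hQ_comm : ∀ t ∈ Γ, ∀ b : A,
        (U t * E * star (U t)) * π b = π b * (U t * E * star (U t)) := by
      intro t ht b
      have e1 : star (U t) * π b = π (σ t⁻¹ b) * star (U t) := by
        rw [hU_star t ht]; exact hcov1 t⁻¹ (hΓ_inv t ht) b
      have e2 : U t * π (σ t⁻¹ b) = π b * U t := by
        have h := hcov1 t ht (σ t⁻¹ b)
        rwa [hσ_invr t b] at h
      calc U t * E * star (U t) * π b
          = U t * E * (star (U t) * π b) := by rw [mul_assoc]
        _ = U t * E * (π (σ t⁻¹ b) * star (U t)) := by rw [e1]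
        _ = U t * (π (σ t⁻¹ b) * E) * star (U t) := by
              rw [← hE_comm]; simp only [mul_assoc]
        _ = U t * π (σ t⁻¹ b) * E * star (U t) := by simp only [mul_assoc]
        _ = π b * U t * E * star (U t) := by rw [e2]
        _ = π b * (U t * E * star (U t)) := by simp only [mul_assoc]
    have hQ_star : ∀ t ∈ Γ, star (U t * E * star (U t)) = U t * E * star (U t) := by
      intro t ht
      simp only [star_mul, star_star, hE_sa.star_eq, mul_assoc]
    have hQ_idem : ∀ t ∈ Γ, (U t * E * star (U t)) * (U t * E * star (U t))
        = U t * E * star (U t) := by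
      intro t ht
      have h2 : star (U t) * U t = 1 := (Unitary.mem_iff.mp (hU_unitary t ht)).1
      calc (U t * E * star (U t)) * (U t * E * star (U t))
          = U t * (E * ((star (U t) * U t) * (E * star (U t)))) := by simp only [mul_assoc]
        _ = U t * (E * (E * star (U t))) := by rw [h2, one_mul]
        _ = U t * ((E * E) * star (U t)) := by simp only [mul_assoc]
        _ = U t * E * star (U t) := by rw [hE_idem.eq]; simp only [mul_assoc]
    -- the elements c s
    set cS : G → A := fun s => cfcₙ (fun x : ℝ => max (x - r s / 2) 0) (σ s a) with hcS_def
    have hf_cont : ∀ s : G, ContinuousOn (fun x : ℝ => max (x - r s / 2) 0)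
        (quasispectrum ℝ (σ s a)) :=
      fun s => ((continuous_id.sub continuous_const).max continuous_const).continuousOn
    have hf_cont' : ∀ s : G, Continuous (fun x : ℝ => max (x - r s / 2) 0) :=
      fun s => (continuous_id.sub continuous_const).max continuous_const
    have hf_zero : ∀ s ∈ Γ, max ((0 : ℝ) - r s / 2) 0 = 0 := by
      intro s hs
      rw [zero_sub, max_eq_right]
      rw [neg_nonpos]
      exact (half_pos (hrpos s hs)).le
    -- ρ (cS s) ≠ 0 for s ∈ S
    have hρc : ∀ s ∈ Γ, ρ (cS s) ≠ 0 := by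
      intro s hs
      have hz_sa : IsSelfAdjoint (ρ (σ s a)) := (hsa_σa s).map ρ
      have hz_nonneg : (0 : H' →L[ℂ] H') ≤ ρ (σ s a) := by
        have he : σ s a = star (σ s a₀) * σ s a₀ := by rw [ha_def, map_mul, map_star]
        rw [he, map_mul, map_star]
        exact star_mul_self_nonneg _
      have hmap : ρ (cS s) = cfcₙ (fun x : ℝ => max (x - r s / 2) 0) (ρ (σ s a)) := by
        exact NonUnitalStarAlgHomClass.map_cfcₙ ρ _ (σ s a) (hf_cont s) (hf_zero s hs)
          hρ_cont (hsa_σa s) hz_sa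
      have hq_nonneg : ∀ x ∈ quasispectrum ℝ (ρ (σ s a)), (0 : ℝ) ≤ x :=
        fun x hx => quasispectrum_nonneg_of_nonneg _ hz_nonneg x hx
      -- split z = cfcₙ f z + cfcₙ g z
      have hg_cont : ContinuousOn (fun x : ℝ => min x (r s / 2))
          (quasispectrum ℝ (ρ (σ s a))) :=
        (continuous_id.min continuous_const).continuousOn
      have hg_zero : min (0 : ℝ) (r s / 2) = 0 := min_eq_left (half_pos (hrpos s hs)).le
      have hsplit : ρ (σ s a) =
          cfcₙ (fun x : ℝ => max (x - r s / 2) 0) (ρ (σ s a))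
            + cfcₙ (fun x : ℝ => min x (r s / 2)) (ρ (σ s a)) := by
        rw [← cfcₙ_add (fun x : ℝ => max (x - r s / 2) 0) (fun x : ℝ => min x (r s / 2))
          (ρ (σ s a)) (hf_cont' s).continuousOn (hf_zero s hs) hg_cont hg_zero]
        have hcongr : Set.EqOn (fun x : ℝ => max (x - r s / 2) 0 + min x (r s / 2))
            (id : ℝ → ℝ) (quasispectrum ℝ (ρ (σ s a))) := by
          intro x hx
          have hx0 : (0 : ℝ) ≤ x := hq_nonneg x hx
          rcases le_total x (r s / 2) with h | h
          · simp only [id]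
            rw [max_eq_right (by linarith), min_eq_left h, zero_add]
          · simp only [id]
            rw [max_eq_left (by linarith), min_eq_right h]
            ring
        rw [cfcₙ_congr hcongr, cfcₙ_id ℝ (ρ (σ s a))]
      have hgle : ‖cfcₙ (fun x : ℝ => min x (r s / 2)) (ρ (σ s a))‖ ≤ r s / 2 := by
        apply norm_cfcₙ_le
        intro x hx
        have hx0 : (0 : ℝ) ≤ x := hq_nonneg x hx
        rw [Real.norm_eq_abs, abs_of_nonneg (le_min hx0 (half_pos (hrpos s hs)).le)]
        exact min_le_right _ _
      have hbig : r s / 2 ≤ ‖cfcₙ (fun x : ℝ => max (x - r s / 2) 0) (ρ (σ s a))‖ := by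
        have h1 : r s = ‖ρ (σ s a)‖ := rfl
        have h2 : ‖ρ (σ s a)‖ ≤ ‖cfcₙ (fun x : ℝ => max (x - r s / 2) 0) (ρ (σ s a))‖
            + ‖cfcₙ (fun x : ℝ => min x (r s / 2)) (ρ (σ s a))‖ := by
          conv_lhs => rw [hsplit]
          exact norm_add_le _ _
        linarith
      intro h0
      rw [hmap] at h0
      rw [h0, norm_zero] at hbig
      linarith [half_pos (hrpos s hs)]
    -- π (cS s) kills U t E U t⁻¹ for t ∈ Γ ∩ V s
    have hkill : ∀ s ∈ Γ, ∀ t ∈ Γ, t ∈ V s →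
        π (cS s) * (U t * E * star (U t)) = 0 := by
      intro s hs t ht htV
      -- package the compression as a star-homomorphism
      set ψ : A →⋆ₙₐ[ℂ] (H →L[ℂ] H) :=
        { toFun := fun b => π b * (U t * E * star (U t)),
          map_add' := fun b b' => by
            show π (b + b') * (U t * E * star (U t)) = _ + _
            rw [map_add, add_mul],
          map_smul' := fun m b => by
            show π (m • b) * (U t * E * star (U t)) = m • (π b * (U t * E * star (U t)))
            rw [map_smul, smul_mul_assoc],
          map_zero' := by
            show π (0 : A) * (U t * E * star (U t)) = 0
            rw [map_zero, zero_mul],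
          map_mul' := fun b b' => by
            show π (b * b') * (U t * E * star (U t)) = _ * _
            rw [map_mul]
            calc π b * π b' * (U t * E * star (U t))
                = π b * (π b' * (U t * E * star (U t))) := by rw [mul_assoc]
              _ = π b * ((U t * E * star (U t)) * π b') := by rw [hQ_comm t ht b']
              _ = π b * ((U t * E * star (U t)) * ((U t * E * star (U t)) * π b')) := by
                    rw [← mul_assoc (U t * E * star (U t)), hQ_idem t ht]
              _ = π b * ((U t * E * star (U t)) * (π b' * (U t * E * star (U t)))) := by
                    rw [hQ_comm t ht b']
              _ = π b * (U t * E * star (U t)) * (π b' * (U t * E * star (U t))) := by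
                    simp only [mul_assoc],
          map_star' := fun b => by
            show π (star b) * (U t * E * star (U t)) = star (π b * (U t * E * star (U t)))
            rw [star_mul, hQ_star t ht, ← map_star]
            exact (hQ_comm t ht (star b)).symm } with hψ_def
      have hψ_apply : ∀ b : A, ψ b = π b * (U t * E * star (U t)) := fun b => rfl
      have hψ_cont : Continuous ψ := by
        simp only [hψ_def]
        exact (hπ_cont.mul continuous_const : Continuous fun b : A => π b * (U t * E * star (U t)))
      have hψta : ψ (σ t a) = 0 := by
        rw [hψ_apply]
        have h1 : π (σ t a) * (U t * E * star (U t))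
            = ((π (σ t a) * U t) * E) * star (U t) := by simp only [mul_assoc]
        rw [h1, ← hcov1 t ht a, mul_assoc (U t) (π a) E, haE, mul_zero, zero_mul]
      have hψsa_norm : ‖ψ (σ s a)‖ < r s / 2 := by
        have h1 : ψ (σ s a) = ψ (σ s a - σ t a) := by
          rw [map_sub, hψta, sub_zero]
        rw [h1]
        calc ‖ψ (σ s a - σ t a)‖ ≤ ‖σ s a - σ t a‖ :=
              NonUnitalStarAlgHom.norm_apply_le ψ _
          _ = ‖σ t a - σ s a‖ := norm_sub_rev _ _
          _ < r s / 2 := htV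
      have hψsa_sa : IsSelfAdjoint (ψ (σ s a)) := (hsa_σa s).map ψ
      have hmap : ψ (cS s) = cfcₙ (fun x : ℝ => max (x - r s / 2) 0) (ψ (σ s a)) :=
        NonUnitalStarAlgHomClass.map_cfcₙ ψ _ (σ s a) (hf_cont s) (hf_zero s hs)
          hψ_cont (hsa_σa s) hψsa_sa
      have hzero : cfcₙ (fun x : ℝ => max (x - r s / 2) 0) (ψ (σ s a)) = 0 := by
        rw [← norm_le_zero_iff]
        apply norm_cfcₙ_le
        intro x hx
        have hxle : ‖(x : ℝ)‖ ≤ ‖ψ (σ s a)‖ := by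
          have h1 := norm_apply_le_norm_cfcₙ (id : ℝ → ℝ) (ψ (σ s a)) hx
            continuous_id.continuousOn rfl hψsa_sa
          rwa [cfcₙ_id ℝ (ψ (σ s a))] at h1
        have hxlt : x < r s / 2 := by
          have := le_abs_self x
          rw [Real.norm_eq_abs] at hxle
          linarith [hψsa_norm]
        rw [Real.norm_eq_abs, abs_of_nonneg (le_max_right _ _), max_eq_right (by linarith)]
      have h0 : ψ (cS s) = 0 := by rw [hmap, hzero]
      rw [← hψ_apply]
      exact h0
    -- build the chain product
    have hmul0 : ∀ t ∈ Γ, ∀ x y : A, π x * (U t * E * star (U t)) = 0 →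
        π (x * y) * (U t * E * star (U t)) = 0 := by
      intro t ht x y h
      rw [map_mul, mul_assoc, ← hQ_comm t ht y, ← mul_assoc, h, zero_mul]
    -- transitivity from irreducibility of ρ
    have htrans : ∀ x c : A, ρ x ≠ 0 → ρ c ≠ 0 → ∃ w : A, ρ (x * w * c) ≠ 0 := by
      intro x c hx hc
      obtain ⟨ξ, hξ⟩ : ∃ ξ : H', ρ c ξ ≠ 0 := by
        by_contra h
        push_neg at h
        exact hc (ContinuousLinearMap.ext fun ξ => by simpa using h ξ)
      set η : H' := ρ c ξ with hη_def
      set lm : A →ₗ[ℂ] H' :=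
        { toFun := fun w => ρ w η,
          map_add' := fun u v => by
            show ρ (u + v) η = ρ u η + ρ v η
            rw [map_add]; rfl,
          map_smul' := fun m u => by
            show ρ (m • u) η = m • (ρ u η)
            rw [map_smul]; rfl } with hlm_def
      set M : Submodule ℂ H' := LinearMap.range lm with hM_def
      set K : Submodule ℂ H' := M.topologicalClosure with hK_def
      have hSstar : ∀ T ∈ Set.range ρ, star T ∈ Set.range ρ := by
        rintro - ⟨b, rfl⟩
        exact ⟨star b, map_star ρ b⟩
      have hSirr : ∀ T : H' →L[ℂ] H', (∀ R ∈ Set.range ρ, T * R = R * T) →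
          ∃ cc : ℂ, T = cc • 1 := fun T hT => hρ_irr T fun b => hT (ρ b) ⟨b, rfl⟩
      have hKinv : ∀ R ∈ Set.range ρ, ∀ v ∈ K, R v ∈ K := by
        rintro - ⟨b, rfl⟩ v hv
        have hmaps : Set.MapsTo (ρ b) (M : Set H') (M : Set H') := by
          rintro - ⟨w, rfl⟩
          refine ⟨b * w, ?_⟩
          show ρ (b * w) η = ρ b (lm w)
          rw [map_mul]
          rfl
        have hv' : v ∈ closure (M : Set H') := hv
        exact map_mem_closure (ρ b).continuous hv' hmaps
      have hKtriv := aux_invariant_trivial (Set.range ρ) hSstar hSirr K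
        M.isClosed_topologicalClosure hKinv
      have hKtop : K = ⊤ := by
        rcases hKtriv with hbot | htop
        · exfalso
          -- then ρ w η = 0 for all w, so η lies in the common kernel N
          have hall : ∀ w : A, ρ w η = 0 := by
            intro w
            have : lm w ∈ K := Submodule.le_topologicalClosure M ⟨w, rfl⟩
            rw [hbot] at this
            exact (Submodule.mem_bot ℂ).mp this
          set N : Submodule ℂ H' :=
            { carrier := {v : H' | ∀ w : A, ρ w v = 0},
              add_mem' := fun hu hv w => by
                rw [map_add]
                show ρ w _ + ρ w _ = 0
                rw [hu w, hv w, add_zero],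
              zero_mem' := fun w => map_zero _,
              smul_mem' := fun m v hv w => by
                rw [map_smul]
                show m • ρ w v = 0
                rw [hv w, smul_zero] } with hN_def
          have hN_closed : IsClosed (N : Set H') := by
            have h1 : (N : Set H') = ⋂ w : A, (ρ w) ⁻¹' {0} := by
              ext v; simp [hN_def, Set.mem_iInter]
            rw [h1]
            exact isClosed_iInter fun w => isClosed_singleton.preimage (ρ w).continuous
          have hNinv : ∀ R ∈ Set.range ρ, ∀ v ∈ N, R v ∈ N := by
            rintro - ⟨b, rfl⟩ v hv w
            have : ρ w (ρ b v) = ρ (w * b) v := by rw [map_mul]; rfl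
            rw [this, hv (w * b)]
          rcases aux_invariant_trivial (Set.range ρ) hSstar hSirr N hN_closed hNinv with
            hNbot | hNtop
          · have hηN : η ∈ N := fun w => hall w
            rw [hNbot] at hηN
            exact hξ (by simpa using hηN)
          · apply hx
            ext v
            have hvN : v ∈ N := by rw [hNtop]; trivial
            simpa using hvN x
        · exact htop
      -- M is dense
      have hMdense : Dense (M : Set H') := by
        rw [dense_iff_closure_eq]
        have h1 : closure (M : Set H') = (K : Set H') :=
          (Submodule.topologicalClosure_coe M).symm
        rw [h1, hKtop, Submodule.top_coe]
      obtain ⟨ζ, hζ⟩ : ∃ ζ : H', ρ x ζ ≠ 0 := by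
        by_contra h
        push_neg at h
        exact hx (ContinuousLinearMap.ext fun ζ => by simpa using h ζ)
      have hO_open : IsOpen {v : H' | ρ x v ≠ 0} :=
        isOpen_compl_singleton.preimage (ρ x).continuous
      obtain ⟨v, hvM, hvO⟩ := hMdense.exists_mem_open hO_open ⟨ζ, hζ⟩
      obtain ⟨w, rfl⟩ := hvM
      refine ⟨w, fun h0 => ?_⟩
      have : ρ (x * w * c) ξ = ρ x (lm w) := by
        rw [map_mul, map_mul]
        rfl
      rw [h0] at this
      simp only [ContinuousLinearMap.zero_apply] at this
      exact hvO this.symm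
    -- the inductive chain construction
    have hchain : ∀ T : Set G, T.Finite → T ⊆ S →
        ∃ x : A, ρ x ≠ 0 ∧ ∀ s ∈ T, ∀ t ∈ Γ, t ∈ V s →
          π x * (U t * E * star (U t)) = 0 := by
      intro T hTfin
      refine Set.Finite.induction_on
        (motive := fun T _ => T ⊆ S → ∃ x : A, ρ x ≠ 0 ∧ ∀ s ∈ T, ∀ t ∈ Γ, t ∈ V s →
          π x * (U t * E * star (U t)) = 0) T hTfin
        (fun _ => ⟨a, hρa, fun s hs => absurd hs (Set.notMem_empty s)⟩) ?_
      · intro s₀ T' hs₀T' hT'fin ih hsub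
        have hs₀S : s₀ ∈ S := hsub (Set.mem_insert s₀ T')
        have hs₀Γ : s₀ ∈ Γ := hSsub hs₀S
        obtain ⟨x, hx, hxkill⟩ := ih fun z hz => hsub (Set.mem_insert_of_mem s₀ hz)
        obtain ⟨w, hw⟩ := htrans x (cS s₀) hx (hρc s₀ hs₀Γ)
        refine ⟨x * w * cS s₀, hw, ?_⟩
        intro s hs t ht htV
        rcases Set.mem_insert_iff.mp hs with rfl | hsT'
        · rw [map_mul, mul_assoc, hkill s hs₀Γ t ht htV, mul_zero]
        · have h1 : π x * (U t * E * star (U t)) = 0 := hxkill s hsT' t ht htV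
          have h2 : x * w * cS s₀ = x * (w * cS s₀) := by rw [mul_assoc]
          rw [h2]
          exact hmul0 t ht x (w * cS s₀) h1
    obtain ⟨x, hρx, hxkill⟩ := hchain S hSfin Set.Subset.rfl
    have hxQ : ∀ t ∈ Γ, π x * (U t * E * star (U t)) = 0 := by
      intro t ht
      obtain ⟨s, hsS, hts⟩ := Set.mem_iUnion₂.mp (hScov ht)
      exact hxkill s hsS t ht hts
    have hxUE : ∀ t ∈ Γ, π x * (U t * E) = 0 := by
      intro t ht
      have h2 : star (U t) * U t = 1 := (Unitary.mem_iff.mp (hU_unitary t ht)).1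
      have hQE : (U t * E * star (U t)) * (U t * E) = U t * E := by
        calc (U t * E * star (U t)) * (U t * E)
            = U t * (E * ((star (U t) * U t) * E)) := by simp only [mul_assoc]
          _ = U t * (E * E) := by rw [h2, one_mul]
          _ = U t * E := by rw [hE_idem.eq]
      calc π x * (U t * E) = π x * ((U t * E * star (U t)) * (U t * E)) := by rw [hQE]
        _ = (π x * (U t * E * star (U t))) * (U t * E) := by simp only [mul_assoc]
        _ = 0 := by rw [hxQ t ht, zero_mul]
    -- density of the span of ⋃_{t ∈ Γ} U t E H
    set gens : Set H := ⋃ t ∈ Γ, Set.range (fun ξ : H => U t (E ξ)) with hgens_def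
    set Msp : Submodule ℂ H := Submodule.span ℂ gens with hMsp_def
    set N : Submodule ℂ H := Msp.topologicalClosure with hN_def
    set Sop : Set (H →L[ℂ] H) := Set.range π ∪ (U '' Γ) with hSop_def
    have hSop_star : ∀ T ∈ Sop, star T ∈ Sop := by
      rintro T (⟨b, rfl⟩ | ⟨t, ht, rfl⟩)
      · exact Or.inl ⟨star b, map_star π b⟩
      · exact Or.inr ⟨t⁻¹, hΓ_inv t ht, (hU_star t ht).symm⟩
    have hSop_irr : ∀ T : H →L[ℂ] H, (∀ R ∈ Sop, T * R = R * T) → ∃ c : ℂ, T = c • 1 :=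
      fun T hT => h_irr T (fun b => hT (π b) (Or.inl ⟨b, rfl⟩))
        (fun s hs => hT (U s) (Or.inr ⟨s, hs, rfl⟩))
    have hgens_inv : ∀ R ∈ Sop, ∀ g ∈ gens, R g ∈ Msp := by
      rintro R (⟨b, rfl⟩ | ⟨t', ht', rfl⟩) g hg
      · obtain ⟨t, htΓ, ξ, rfl⟩ : ∃ t ∈ Γ, ∃ ξ : H, U t (E ξ) = g := by
          obtain ⟨t, htΓ, hgr⟩ := Set.mem_iUnion₂.mp hg
          obtain ⟨ξ, rfl⟩ := hgr
          exact ⟨t, htΓ, ξ, rfl⟩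
        have hop : π b * (U t * E) = (U t * E) * π (σ t⁻¹ b) := by
          calc π b * (U t * E) = (π b * U t) * E := by rw [mul_assoc]
            _ = (U t * π (σ t⁻¹ b)) * E := by rw [hcov2 t htΓ b]
            _ = U t * (π (σ t⁻¹ b) * E) := by rw [mul_assoc]
            _ = U t * (E * π (σ t⁻¹ b)) := by rw [hE_comm]
            _ = (U t * E) * π (σ t⁻¹ b) := by rw [mul_assoc]
        have happ : π b (U t (E ξ)) = U t (E (π (σ t⁻¹ b) ξ)) := by
          have h1 := DFunLike.congr_fun hop ξ
          simpa only [ContinuousLinearMap.mul_apply] using h1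
        rw [happ]
        exact Submodule.subset_span (Set.mem_iUnion₂.mpr ⟨t, htΓ, ⟨π (σ t⁻¹ b) ξ, rfl⟩⟩)
      · obtain ⟨t, htΓ, ξ, rfl⟩ : ∃ t ∈ Γ, ∃ ξ : H, U t (E ξ) = g := by
          obtain ⟨t, htΓ, hgr⟩ := Set.mem_iUnion₂.mp hg
          obtain ⟨ξ, rfl⟩ := hgr
          exact ⟨t, htΓ, ξ, rfl⟩
        have happ : U t' (U t (E ξ)) = U (t' * t) (E ξ) := by
          rw [hU_mul t' ht' t htΓ]
          rfl
        rw [happ]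
        exact Submodule.subset_span
          (Set.mem_iUnion₂.mpr ⟨t' * t, hΓ_mul t' ht' t htΓ, ⟨ξ, rfl⟩⟩)
    have hMsp_inv : ∀ R ∈ Sop, ∀ v ∈ Msp, R v ∈ Msp := by
      intro R hR v hv
      induction hv using Submodule.span_induction with
      | mem g hg => exact hgens_inv R hR g hg
      | zero => rw [map_zero]; exact Submodule.zero_mem _
      | add u v _ _ hu hv => rw [map_add]; exact Submodule.add_mem _ hu hv
      | smul m u _ hu => rw [map_smul]; exact Submodule.smul_mem _ m hu
    have hN_inv : ∀ R ∈ Sop, ∀ v ∈ N, R v ∈ N := by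
      intro R hR v hv
      have hv' : v ∈ closure (Msp : Set H) := hv
      exact map_mem_closure R.continuous hv' fun z hz => hMsp_inv R hR z hz
    have hN_ne : N ≠ ⊥ := by
      obtain ⟨ξ₀, hξ₀⟩ : ∃ ξ₀ : H, E ξ₀ ≠ 0 := by
        by_contra h
        push_neg at h
        exact hE_ne (ContinuousLinearMap.ext fun ξ => by simpa using h ξ)
      have hg : E ξ₀ ∈ gens := by
        apply Set.mem_iUnion₂.mpr
        refine ⟨1, hΓ_one, ⟨ξ₀, ?_⟩⟩
        rw [hU_one]
        rfl
      have hmem : E ξ₀ ∈ N := Submodule.le_topologicalClosure Msp (Submodule.subset_span hg)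
      intro h
      rw [h] at hmem
      exact hξ₀ (by simpa using hmem)
    have hNtop : N = ⊤ := by
      rcases aux_invariant_trivial Sop hSop_star hSop_irr N
        Msp.isClosed_topologicalClosure hN_inv with h | h
      · exact absurd h hN_ne
      · exact h
    -- conclude π x = 0, contradiction
    have hπx : π x = 0 := by
      have hker : Msp ≤ LinearMap.ker (π x : H →ₗ[ℂ] H) := by
        rw [Submodule.span_le]
        intro g hg
        obtain ⟨t, htΓ, ξ, rfl⟩ : ∃ t ∈ Γ, ∃ ξ : H, U t (E ξ) = g := by
          obtain ⟨t, htΓ, hgr⟩ := Set.mem_iUnion₂.mp hg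
          obtain ⟨ξ, rfl⟩ := hgr
          exact ⟨t, htΓ, ξ, rfl⟩
        have h1 := DFunLike.congr_fun (hxUE t htΓ) ξ
        exact (by simpa only [ContinuousLinearMap.mul_apply, ContinuousLinearMap.zero_apply] using h1 :
          π x (U t (E ξ)) = 0)
      have hker2 : N ≤ LinearMap.ker (π x : H →ₗ[ℂ] H) :=
        Submodule.topologicalClosure_minimal Msp hker
          (ContinuousLinearMap.isClosed_ker (π x))
      rw [hNtop] at hker2
      ext v
      have : v ∈ LinearMap.ker (π x : H →ₗ[ℂ] H) := hker2 trivial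
      simpa using this
    have hxP : x ∈ P := by rw [← h_ker]; exact hπx
    rw [hP] at hxP
    exact hρx hxP
  · -- easy inclusion: P ⊆ kernel of the subrepresentation
    intro b hb
    show π b * E = 0
    have hb0 : π b = 0 := by rw [← h_ker] at hb; exact hb
    rw [hb0, zero_mul]
end
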